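/- Fix r, s ∈ ℚ. Let g ∈ ℚ⟦X⟧ satisfy g = 1 + r·X·g + s·X·g², and let m ∈ ℚ⟦X⟧ satisfy m = 1 + (r+2s)·X·m + s(r+s)·X²·m². Then g·(1 - (r+s)·X - s(r+s)·X²·m) = 1; that is, g = 1/(1 - (r+s)x - s(r+s)x²·m). Hence the same series g is simultaneously given by the Thron continued fraction enumerating (r,s)-Schroeder paths and by the Jacobi continued fraction enumerating generalized Motzkin paths with r+s level steps at level 0, r+2s level steps at higher levels, and s(r+s) types of down steps. -/

import Mathlib

open PowerSeries

/-- Uniqueness of the power series solution of `f = 1 + rXf + sXf²`. -/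
lemma schroeder_uniq (r s : ℚ) (g u : PowerSeries ℚ)
    (hg : g = 1 + PowerSeries.C r * PowerSeries.X * g
      + PowerSeries.C s * PowerSeries.X * g ^ 2)
    (hu : u = 1 + PowerSeries.C r * PowerSeries.X * u
      + PowerSeries.C s * PowerSeries.X * u ^ 2) : g = u := by
  have h0 : (g - u) * (1 - PowerSeries.C r * PowerSeries.X
      - PowerSeries.C s * PowerSeries.X * (g + u)) = 0 := by
    linear_combination hg - hu
  have hne : (1 - PowerSeries.C r * PowerSeries.X
      - PowerSeries.C s * PowerSeries.X * (g + u)) ≠ 0 := by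
    intro h
    have := congrArg (PowerSeries.constantCoeff) h
    simp at this
  rcases mul_eq_zero.mp h0 with h | h
  · exact sub_eq_zero.mp h
  · exact absurd h hne

theorem stmt_11 (r s : ℚ) (g m : PowerSeries ℚ)
    (hg : g = 1 + PowerSeries.C r * PowerSeries.X * g
      + PowerSeries.C s * PowerSeries.X * g ^ 2)
    (hm : m = 1 + PowerSeries.C (r + 2 * s) * PowerSeries.X * m
      + PowerSeries.C (s * (r + s)) * PowerSeries.X ^ 2 * m ^ 2) :
    g * (1 - PowerSeries.C (r + s) * PowerSeries.X
      - PowerSeries.C (s * (r + s)) * PowerSeries.X ^ 2 * m) = 1 := by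
  set u : PowerSeries ℚ := 1 + PowerSeries.C (r + s) * PowerSeries.X * m with hu
  have hueq : u = 1 + PowerSeries.C r * PowerSeries.X * u
      + PowerSeries.C s * PowerSeries.X * u ^ 2 := by
    rw [hu]
    simp only [map_add, map_mul, map_ofNat] at hm ⊢
    linear_combination ((PowerSeries.C r + PowerSeries.C s) * PowerSeries.X) * hm
  have hgu : g = u := schroeder_uniq r s g u hg hueq
  rw [hgu, hu]
  simp only [map_add, map_mul, map_ofNat] at hm ⊢
  linear_combination ((PowerSeries.C r + PowerSeries.C s) * PowerSeries.X) * hm
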